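/- Let ρ₁ ∈ ℝ, ρ₂, ρ₃, κ > 0, and define σ = (2ρ₁ρ₂ - 2κ√(ρ₂ρ₃))/(ρ₂ + κ), δ = (σ + √(σ² + 16ρ₂ρ₃))/(4ρ₂). Set b(s) = e^{-σ s} and a(s) = δ·b(s). If ρ₁ ≥ κ√(ρ₃/ρ₂), then on [0,∞): b'(s) + 2ρ₂ a(s) - 2ρ₃ b(s)²/a(s) = 0 and a'(s) + 2ρ₁ a(s) - 2κ a(s)²/b(s) ≥ 0. -/

import Mathlib

set_option maxHeartbeats 1000000 in
/-- The explicit exponential functions `b(s) = e^{-σs}`, `a(s) = δ b(s)` solve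
the required differential (in)equalities on `[0, ∞)`. -/
theorem stmt_7 (ρ₁ ρ₂ ρ₃ κ : ℝ) (hρ₂ : 0 < ρ₂) (hρ₃ : 0 < ρ₃) (hκ : 0 < κ)
    (hρ₁ : ρ₁ ≥ κ * Real.sqrt (ρ₃ / ρ₂))
    (σ δ : ℝ)
    (hσ : σ = (2 * ρ₁ * ρ₂ - 2 * κ * Real.sqrt (ρ₂ * ρ₃)) / (ρ₂ + κ))
    (hδ : δ = (σ + Real.sqrt (σ ^ 2 + 16 * ρ₂ * ρ₃)) / (4 * ρ₂))
    (a b : ℝ → ℝ)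
    (hb : b = fun s => Real.exp (-σ * s))
    (ha : a = fun s => δ * b s) :
    ∀ s : ℝ, 0 ≤ s →
      deriv b s + 2 * ρ₂ * a s - 2 * ρ₃ * (b s) ^ 2 / a s = 0 ∧
      deriv a s + 2 * ρ₁ * a s - 2 * κ * (a s) ^ 2 / b s ≥ 0 := by
  have hρ₂κ : 0 < ρ₂ + κ := by linarith
  set t := Real.sqrt (ρ₂ * ρ₃) with ht
  have ht2 : t ^ 2 = ρ₂ * ρ₃ := Real.sq_sqrt (by positivity)
  have htpos : 0 < t := Real.sqrt_pos.2 (by positivity)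
  set u := Real.sqrt (σ ^ 2 + 16 * ρ₂ * ρ₃) with hu
  have hu2 : u ^ 2 = σ ^ 2 + 16 * ρ₂ * ρ₃ := Real.sq_sqrt (by positivity)
  have hunn : 0 ≤ u := Real.sqrt_nonneg _
  have husig : 0 < σ + u := by nlinarith [sq_nonneg (σ + u), mul_pos hρ₂ hρ₃]
  have hδpos : 0 < δ := by rw [hδ]; exact div_pos husig (by positivity)
  have h4 : 4 * ρ₂ * δ = σ + u := by rw [hδ]; field_simp
  have hquad8 : 8 * ρ₂ * (2 * ρ₂ * δ ^ 2 - σ * δ - 2 * ρ₃) = 0 := by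
    linear_combination (4 * ρ₂ * δ + u - σ) * h4 + hu2
  have hquad : 2 * ρ₂ * δ ^ 2 - σ * δ - 2 * ρ₃ = 0 :=
    (mul_eq_zero.1 hquad8).resolve_left (by positivity)
  -- ρ₁ * ρ₂ ≥ κ * t
  have hts : t = ρ₂ * Real.sqrt (ρ₃ / ρ₂) := by
    rw [ht, show ρ₂ * ρ₃ = ρ₂ ^ 2 * (ρ₃ / ρ₂) by field_simp,
      Real.sqrt_mul (by positivity), Real.sqrt_sq hρ₂.le]
  have hA : κ * t ≤ ρ₁ * ρ₂ := by
    rw [hts]; nlinarith [hρ₁, hρ₂]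
  have hρ₁pos : 0 < ρ₁ :=
    lt_of_lt_of_le (by positivity : (0:ℝ) < κ * Real.sqrt (ρ₃ / ρ₂)) hρ₁
  have hσeq : σ * (ρ₂ + κ) = 2 * ρ₁ * ρ₂ - 2 * κ * t := by
    rw [hσ]; field_simp
  have hVnn : 0 ≤ 2 * (ρ₁ * ρ₂ + 2 * ρ₂ * t + κ * t) := by positivity
  have hL2 : u * (ρ₂ + κ) ≤ 2 * (ρ₁ * ρ₂ + 2 * ρ₂ * t + κ * t) := by
    have hσsq : (σ * (ρ₂ + κ)) ^ 2 = (2 * ρ₁ * ρ₂ - 2 * κ * t) ^ 2 := by rw [hσeq]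
    have hsq : (u * (ρ₂ + κ)) ^ 2 ≤ (2 * (ρ₁ * ρ₂ + 2 * ρ₂ * t + κ * t)) ^ 2 := by
      have hu2' : u ^ 2 * (ρ₂ + κ) ^ 2 = (σ ^ 2 + 16 * ρ₂ * ρ₃) * (ρ₂ + κ) ^ 2 := by
        linear_combination (ρ₂ + κ) ^ 2 * hu2
      have hAB : 0 ≤ (ρ₁ * ρ₂ - κ * t) * (2 * t * (ρ₂ + κ)) :=
        mul_nonneg (by linarith) (by positivity)
      nlinarith [hu2', hσsq, ht2, hAB, sq_nonneg (ρ₂ + κ)]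
    exact le_of_pow_le_pow_left₀ two_ne_zero hVnn hsq
  have hkey : 0 ≤ 2 * ρ₁ - σ - 2 * κ * δ := by
    have hδu : 8 * ρ₂ * (ρ₂ + κ) * (κ * δ) = 2 * κ * (ρ₂ + κ) * (σ + u) := by
      linear_combination 2 * κ * (ρ₂ + κ) * h4
    have hσ2 : (4 * ρ₂ + 2 * κ) * (σ * (ρ₂ + κ)) =
        (4 * ρ₂ + 2 * κ) * (2 * ρ₁ * ρ₂ - 2 * κ * t) := by
      linear_combination (4 * ρ₂ + 2 * κ) * hσeq
    have hL2κ : 2 * κ * (u * (ρ₂ + κ)) ≤ 2 * κ * (2 * (ρ₁ * ρ₂ + 2 * ρ₂ * t + κ * t)) :=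
      mul_le_mul_of_nonneg_left hL2 (by positivity)
    have h1 : 0 ≤ (2 * ρ₁ - σ - 2 * κ * δ) * (4 * ρ₂ * (ρ₂ + κ)) := by
      linarith [hδu, hσ2, hL2κ]
    by_contra hcon
    push_neg at hcon
    nlinarith [mul_pos (neg_pos.2 hcon) (by positivity : (0:ℝ) < 4 * ρ₂ * (ρ₂ + κ))]
  -- derivatives
  have hdb : ∀ s : ℝ, deriv b s = -σ * b s := by
    intro s
    have h : HasDerivAt (fun s : ℝ => Real.exp (-σ * s)) (Real.exp (-σ * s) * (-σ)) s := by
      simpa using ((hasDerivAt_id s).const_mul (-σ)).exp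
    rw [hb, h.deriv]; ring
  have ha' : a = fun s : ℝ => δ * Real.exp (-σ * s) := by rw [ha, hb]
  have hda : ∀ s : ℝ, deriv a s = -σ * a s := by
    intro s
    have h : HasDerivAt (fun s : ℝ => δ * Real.exp (-σ * s))
        (δ * (Real.exp (-σ * s) * (-σ))) s := by
      simpa using (((hasDerivAt_id s).const_mul (-σ)).exp).const_mul δ
    rw [ha', h.deriv]; ring
  intro s _
  have hbpos : 0 < b s := by rw [hb]; exact Real.exp_pos _
  have has : a s = δ * b s := by rw [ha]
  have hapos : 0 < a s := by rw [has]; positivity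
  constructor
  · rw [hdb s, has]
    have hsc : -σ + 2 * ρ₂ * δ - 2 * ρ₃ / δ = 0 := by
      field_simp
      linear_combination hquad
    have : -σ * b s + 2 * ρ₂ * (δ * b s) - 2 * ρ₃ * b s ^ 2 / (δ * b s)
        = b s * (-σ + 2 * ρ₂ * δ - 2 * ρ₃ / δ) := by
      field_simp
    rw [this, hsc, mul_zero]
  · rw [hda s]
    have h2 : 2 * κ * a s ^ 2 / b s = 2 * κ * δ * a s := by
      rw [has]; field_simp
    rw [h2]
    nlinarith [mul_nonneg hkey hapos.le]
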